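/- Unbiasedness of the M-dimensional random Fourier feature map: let p be a probability distribution on ℝ^d with K(x, x') = E_{w∼p}[cos(wᵀ(x − x'))], and let (w_1, b_1), …, (w_M, b_M) be i.i.d. with w_i ∼ p and b_i ∼ U_{[0,2π]} independent. Define ψ(x) = √(2/M)·(cos(w_1ᵀx + b_1), …, cos(w_Mᵀx + b_M)) ∈ ℝ^M. Then for all x, x' ∈ ℝ^d, E[ψ(x)ᵀψ(x')] = K(x, x'). -/

import Mathlib

open MeasureTheory Real
open scoped BigOperators

/-- The uniform probability distribution on `[0, 2π]`. -/
noncomputable def uniform02pi : Measure ℝ :=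
  (ENNReal.ofReal (2 * π))⁻¹ • volume.restrict (Set.Icc (0:ℝ) (2 * π))

/-- The M-dimensional random Fourier feature map built from i.i.d. samples
`(w_1,b_1),…,(w_M,b_M)`: `ψ(x)_i = √(2/M) cos(w_iᵀx + b_i)`. -/
noncomputable def rffMap {d M : ℕ} (ω : Fin M → ((Fin d → ℝ) × ℝ)) (x : Fin d → ℝ) :
    Fin M → ℝ :=
  fun i => Real.sqrt (2 / M) * Real.cos ((∑ j, (ω i).1 j * x j) + (ω i).2)

lemma aux_pi_map_eval {ι : Type*} [Fintype ι] [DecidableEq ι] {α : ι → Type*} [∀ i, MeasurableSpace (α i)]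
    (μ : ∀ i, Measure (α i)) [∀ i, IsProbabilityMeasure (μ i)] (i : ι) :
    (Measure.pi μ).map (Function.eval i) = μ i := by
  ext s hs
  rw [Measure.map_apply (measurable_pi_apply i) hs]
  rw [show Function.eval i ⁻¹' s = Set.pi Set.univ (Function.update (fun j => Set.univ) i s) from
    (Set.univ_pi_update_univ i s).symm, Measure.pi_pi]
  rw [Finset.prod_eq_single i]
  · simp
  · intro j _ hj; simp [Function.update_of_ne hj]
  · simp

instance : IsProbabilityMeasure uniform02pi := by
  constructor
  rw [uniform02pi]
  rw [Measure.smul_apply, Measure.restrict_apply MeasurableSet.univ, Set.univ_inter,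
    Real.volume_Icc]
  rw [show (2 * π - 0 : ℝ) = 2 * π by ring, smul_eq_mul]
  exact ENNReal.inv_mul_cancel (ENNReal.ofReal_pos.mpr Real.two_pi_pos).ne'
    ENNReal.ofReal_ne_top

lemma uniform_integral (f : ℝ → ℝ) :
    ∫ b, f b ∂uniform02pi = (2*π)⁻¹ * ∫ b in (0:ℝ)..(2*π), f b := by
  rw [uniform02pi, integral_smul_measure,
    intervalIntegral.integral_of_le Real.two_pi_pos.le,
    ← MeasureTheory.integral_Icc_eq_integral_Ioc,
    ENNReal.toReal_inv, ENNReal.toReal_ofReal Real.two_pi_pos.le, smul_eq_mul]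

lemma cos_int (c : ℝ) : ∫ b in (0:ℝ)..(2*π), Real.cos (c + 2*b) = 0 := by
  have h : ∀ b : ℝ, HasDerivAt (fun b => Real.sin (c + 2*b) / 2) (Real.cos (c + 2*b)) b := by
    intro b
    have h1 : HasDerivAt (fun b : ℝ => c + 2*b) 2 b := by
      simpa using ((hasDerivAt_id b).const_mul 2).const_add c
    have h2 := (Real.hasDerivAt_sin (c + 2*b)).comp b h1
    have h3 := h2.div_const 2
    rw [show Real.cos (c + 2*b) = Real.cos (c + 2*b) * 2 / 2 by ring]
    exact h3
  rw [intervalIntegral.integral_eq_sub_of_hasDerivAt (fun b _ => h b)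
    (Continuous.intervalIntegrable (by continuity) _ _)]
  rw [show c + 2*(2*π) = (c + 2*0) + 2*π + 2*π by ring, Real.sin_add_two_pi,
    Real.sin_add_two_pi]
  ring

lemma cos_integrable (c k : ℝ) :
    Integrable (fun b => Real.cos (c + k*b)) uniform02pi := by
  refine (integrable_const (1:ℝ)).mono' (Continuous.aestronglyMeasurable (by continuity)) ?_
  filter_upwards with b
  simpa using Real.abs_cos_le_one _

lemma key_integral (a a' : ℝ) :
    ∫ b, Real.cos (a + b) * Real.cos (a' + b) ∂uniform02pi = Real.cos (a - a') / 2 := by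
  have hprod : ∀ b : ℝ, Real.cos (a + b) * Real.cos (a' + b)
      = Real.cos (a - a') / 2 + Real.cos ((a + a') + 2*b) / 2 := by
    have gen : ∀ A B : ℝ, Real.cos A * Real.cos B
        = Real.cos (A - B) / 2 + Real.cos (A + B) / 2 := by
      intro A B; rw [Real.cos_sub, Real.cos_add]; ring
    intro b
    rw [gen, show (a+b) - (a'+b) = a - a' by ring,
      show (a+b) + (a'+b) = (a + a') + 2*b by ring]
  simp_rw [hprod]
  rw [integral_add (integrable_const _) ((cos_integrable (a+a') 2).div_const 2),
    integral_const, integral_div, uniform_integral, cos_int]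
  simp

/-- Unbiasedness of the M-dimensional random Fourier feature map: if the shift-invariant
kernel satisfies `K(x,x') = E_{w∼p}[cos(wᵀ(x-x'))]` and `(w_i, b_i)`, `i = 1,…,M`, are i.i.d.
with `w_i ∼ p` and `b_i ∼ U[0,2π]` independent, then `E[ψ(x)ᵀψ(x')] = K(x,x')`. -/
theorem rff_map_unbiased {d M : ℕ} (hM : 0 < M)
    (p : Measure (Fin d → ℝ)) [IsProbabilityMeasure p]
    (K : (Fin d → ℝ) → (Fin d → ℝ) → ℝ)
    (hK : ∀ x x' : Fin d → ℝ,
      K x x' = ∫ w, Real.cos (∑ i, w i * (x i - x' i)) ∂p)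
    (x x' : Fin d → ℝ) :
    ∫ ω : Fin M → ((Fin d → ℝ) × ℝ),
        (∑ i, rffMap ω x i * rffMap ω x' i)
        ∂(Measure.pi fun _ => p.prod uniform02pi)
      = K x x' := by
  classical
  have hMR : (0:ℝ) < M := Nat.cast_pos.mpr hM
  set ν := p.prod uniform02pi with hν
  set g : ((Fin d → ℝ) × ℝ) → ℝ := fun wb =>
    (Real.sqrt (2 / M) * Real.cos ((∑ j, wb.1 j * x j) + wb.2)) *
    (Real.sqrt (2 / M) * Real.cos ((∑ j, wb.1 j * x' j) + wb.2)) with hg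
  have hsq : Real.sqrt (2 / (M:ℝ)) * Real.sqrt (2 / (M:ℝ)) = 2 / (M:ℝ) :=
    Real.mul_self_sqrt (by positivity)
  have hphase : ∀ y : Fin d → ℝ, Measurable fun wb : (Fin d → ℝ) × ℝ =>
      (∑ j, wb.1 j * y j) + wb.2 := by
    intro y
    exact (Finset.measurable_sum _ fun j _ =>
      ((measurable_pi_apply j).comp measurable_fst).mul_const _).add measurable_snd
  have hccmeas : Measurable fun wb : (Fin d → ℝ) × ℝ =>
      Real.cos ((∑ j, wb.1 j * x j) + wb.2) * Real.cos ((∑ j, wb.1 j * x' j) + wb.2) :=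
    (Real.continuous_cos.measurable.comp (hphase x)).mul
      (Real.continuous_cos.measurable.comp (hphase x'))
  have hgmeas : Measurable g := by
    rw [hg]
    exact (measurable_const.mul (Real.continuous_cos.measurable.comp (hphase x))).mul
      (measurable_const.mul (Real.continuous_cos.measurable.comp (hphase x')))
  have hgbd : ∀ wb, |g wb| ≤ 2 / (M:ℝ) := by
    intro wb
    have hc : (0:ℝ) ≤ Real.sqrt (2 / (M:ℝ)) := Real.sqrt_nonneg _
    have hA := Real.abs_cos_le_one ((∑ j, wb.1 j * x j) + wb.2)
    have hB := Real.abs_cos_le_one ((∑ j, wb.1 j * x' j) + wb.2)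
    have hA0 := abs_nonneg (Real.cos ((∑ j, wb.1 j * x j) + wb.2))
    have hB0 := abs_nonneg (Real.cos ((∑ j, wb.1 j * x' j) + wb.2))
    have habs : |g wb| = (Real.sqrt (2 / (M:ℝ)) * Real.sqrt (2 / (M:ℝ))) *
        (|Real.cos ((∑ j, wb.1 j * x j) + wb.2)| *
          |Real.cos ((∑ j, wb.1 j * x' j) + wb.2)|) := by
      rw [hg, abs_mul, abs_mul, abs_mul, abs_of_nonneg hc]; ring
    rw [habs, hsq]
    have hprod1 : |Real.cos ((∑ j, wb.1 j * x j) + wb.2)| *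
        |Real.cos ((∑ j, wb.1 j * x' j) + wb.2)| ≤ 1 := mul_le_one₀ hA hB0 hB
    have hpos : (0:ℝ) ≤ 2 / (M:ℝ) := by positivity
    nlinarith
  have hccint : Integrable (fun wb : (Fin d → ℝ) × ℝ =>
      Real.cos ((∑ j, wb.1 j * x j) + wb.2) * Real.cos ((∑ j, wb.1 j * x' j) + wb.2)) ν := by
    refine (integrable_const (1:ℝ)).mono' hccmeas.aestronglyMeasurable ?_
    filter_upwards with wb
    have hA := Real.abs_cos_le_one ((∑ j, wb.1 j * x j) + wb.2)
    have hB := Real.abs_cos_le_one ((∑ j, wb.1 j * x' j) + wb.2)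
    have hB0 := abs_nonneg (Real.cos ((∑ j, wb.1 j * x' j) + wb.2))
    simp only [norm_eq_abs, abs_mul, norm_one]
    exact mul_le_one₀ hA hB0 hB
  have hgval : ∫ wb, g wb ∂ν = K x x' / M := by
    have hrw : ∀ wb : (Fin d → ℝ) × ℝ, g wb = (2 / (M:ℝ)) *
        (Real.cos ((∑ j, wb.1 j * x j) + wb.2) * Real.cos ((∑ j, wb.1 j * x' j) + wb.2)) := by
      intro wb
      have h2 : g wb = (Real.sqrt (2 / (M:ℝ)) * Real.sqrt (2 / (M:ℝ))) *
          (Real.cos ((∑ j, wb.1 j * x j) + wb.2) *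
            Real.cos ((∑ j, wb.1 j * x' j) + wb.2)) := by rw [hg]; ring
      rw [h2, hsq]
    simp_rw [hrw]
    rw [integral_const_mul, hν, integral_prod _ hccint]
    have hin : ∀ w : Fin d → ℝ,
        (∫ b, Real.cos ((∑ j, w j * x j) + b) * Real.cos ((∑ j, w j * x' j) + b) ∂uniform02pi)
        = Real.cos (∑ j, w j * (x j - x' j)) / 2 := by
      intro w
      rw [key_integral]
      congr 2
      rw [← Finset.sum_sub_distrib]
      exact Finset.sum_congr rfl fun j _ => by ring
    simp_rw [hin]
    rw [integral_div, ← hK]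
    field_simp
  have hterm : ∀ i : Fin M, (∫ ω : Fin M → ((Fin d → ℝ) × ℝ),
      rffMap ω x i * rffMap ω x' i ∂(Measure.pi fun _ => ν)) = K x x' / M := by
    intro i
    have heq : (fun ω : Fin M → ((Fin d → ℝ) × ℝ) => rffMap ω x i * rffMap ω x' i)
        = g ∘ (Function.eval i) := rfl
    rw [heq]
    have hmap := integral_map (μ := Measure.pi fun _ : Fin M => ν) (φ := Function.eval i)
      (measurable_pi_apply i).aemeasurable (f := g) hgmeas.aestronglyMeasurable
    rw [aux_pi_map_eval (fun _ : Fin M => ν) i] at hmap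
    show (∫ ω : Fin M → ((Fin d → ℝ) × ℝ), g (Function.eval i ω)
      ∂(Measure.pi fun _ => ν)) = K x x' / M
    rw [← hmap, hgval]
  rw [integral_finset_sum]
  · rw [Finset.sum_congr rfl fun i _ => hterm i, Finset.sum_const, Finset.card_univ,
      Fintype.card_fin, nsmul_eq_mul]
    field_simp
  · intro i _
    refine (integrable_const (2 / (M:ℝ))).mono'
      ((hgmeas.comp (measurable_pi_apply i)).aestronglyMeasurable) ?_
    filter_upwards with ω
    show ‖g (ω i)‖ ≤ 2 / (M:ℝ)
    rw [norm_eq_abs]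
    exact hgbd (ω i)
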